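/- The function μ₅ satisfies μ₅ n ≥ 0 for all n, μ₅ is positive definite on ℤ/5ℤ, and ∑_{n ∈ ZMod 5} V₅ n * μ₅ n = 2 - √5 < 0. -/

import Mathlib

open Finset
open scoped ComplexOrder

/-- The potential `V₅` on `ZMod 5`: `V₅ 0 = V₅ 2 = V₅ 3 = 1`, `V₅ 1 = V₅ 4 = -1`. -/
def V₅ : ZMod 5 → ℝ := fun n => if n = 1 ∨ n = 4 then -1 else 1

/-- `μ₅ 0 = 1`, `μ₅ 1 = μ₅ 4 = (√5 - 1)/2`, `μ₅ 2 = μ₅ 3 = 0`. -/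
noncomputable def μ₅ : ZMod 5 → ℝ := fun n =>
  if n = 0 then 1 else if n = 1 ∨ n = 4 then (Real.sqrt 5 - 1) / 2 else 0

/-- A real-valued function on an additive abelian group is positive definite if all its
"quadratic forms" with complex coefficients are real and nonnegative. -/
def IsPosDef {G : Type*} [AddCommGroup G] (g : G → ℝ) : Prop :=
  ∀ (N : ℕ) (x : Fin N → G) (c : Fin N → ℂ),
    0 ≤ ∑ i, ∑ j, c i * (starRingEnd ℂ) (c j) * (g (x i - x j) : ℂ)

noncomputable def ω : ℂ := Complex.exp (2 * Real.pi * Complex.I / 5)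

lemma ω_pow_five : ω ^ 5 = 1 := by
  rw [ω, ← Complex.exp_nat_mul]
  rw [show (5:ℕ) * (2 * Real.pi * Complex.I / 5) = 2 * Real.pi * Complex.I by push_cast; ring]
  exact Complex.exp_two_pi_mul_I

lemma ω_eq : ω = Complex.exp ((2 * Real.pi / 5 : ℝ) * Complex.I) := by
  rw [ω]; congr 1; push_cast; ring

lemma conj_ω : (starRingEnd ℂ) ω = ω⁻¹ := by
  rw [ω_eq, ← Complex.exp_conj, ← Complex.exp_neg]
  congr 1
  rw [map_mul, Complex.conj_ofReal, Complex.conj_I]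
  ring

lemma ω_re : ω + ω⁻¹ = ((Real.sqrt 5 - 1) / 2 : ℝ) := by
  have h1 : ω + ω⁻¹ = 2 * (Complex.exp ((2 * Real.pi / 5 : ℝ) * Complex.I)).re := by
    rw [← conj_ω, Complex.add_conj, ω_eq]
    norm_num
  rw [h1, Complex.exp_ofReal_mul_I_re]
  have h2 : (2 * Real.pi / 5) = 2 * (Real.pi / 5) := by ring
  rw [h2, Real.cos_two_mul, Real.cos_pi_div_five]
  have h5 : Real.sqrt 5 ^ 2 = 5 := Real.sq_sqrt (by norm_num)
  have key : 2 * (2 * ((1 + Real.sqrt 5)/4)^2 - 1) = (Real.sqrt 5 - 1)/2 := by nlinarith [h5]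
  push_cast
  have hk := congrArg Complex.ofReal key
  push_cast at hk ⊢
  linear_combination hk

lemma ω2_re : ω^2 + (ω^2)⁻¹ = (-(1 + Real.sqrt 5) / 2 : ℝ) := by
  have h1 : ω^2 = Complex.exp ((4 * Real.pi / 5 : ℝ) * Complex.I) := by
    rw [ω, ← Complex.exp_nat_mul]
    congr 1; push_cast; ring
  have h2 : ω^2 + (ω^2)⁻¹ = 2 * (Complex.exp ((4 * Real.pi / 5 : ℝ) * Complex.I)).re := by
    rw [show (ω^2)⁻¹ = (starRingEnd ℂ) (ω^2) by rw [map_pow, conj_ω]; group, ← h1,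
      Complex.add_conj]
    norm_num
  rw [h2, Complex.exp_ofReal_mul_I_re]
  have h3 : (4 * Real.pi / 5) = Real.pi - Real.pi / 5 := by ring
  rw [h3, Real.cos_pi_sub, Real.cos_pi_div_five]
  have key : 2 * (-((1 + Real.sqrt 5)/4)) = -(1 + Real.sqrt 5)/2 := by ring
  push_cast
  have hk := congrArg Complex.ofReal key
  push_cast at hk ⊢
  linear_combination hk

noncomputable def φ : ZMod 5 → ℂ := fun n => ω ^ n.val

lemma ω_pow_mod (a : ℕ) : ω ^ a = ω ^ (a % 5) := by
  conv_lhs => rw [← Nat.div_add_mod a 5]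
  rw [pow_add, pow_mul, ω_pow_five, one_pow, one_mul]

lemma φ_ne_zero (n : ZMod 5) : φ n ≠ 0 := pow_ne_zero _ (Complex.exp_ne_zero _)

lemma φ_sub (x y : ZMod 5) : φ (x - y) = φ x * (starRingEnd ℂ) (φ y) := by
  have hconj : (starRingEnd ℂ) (φ y) = (φ y)⁻¹ := by
    rw [φ, map_pow, conj_ω, inv_pow]
  have key : φ (x - y) * φ y = φ x := by
    rw [φ, φ, φ, ← pow_add, ω_pow_mod, ← ZMod.val_add, sub_add_cancel]
  rw [hconj]
  field_simp [φ_ne_zero y]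
  linear_combination key

lemma ω4_eq : ω^4 = ω⁻¹ := by
  have h : ω^4 * ω = 1 := by rw [← pow_succ]; exact ω_pow_five
  exact eq_inv_of_mul_eq_one_left h

lemma ω3_eq : ω^3 = (ω^2)⁻¹ := by
  have h : ω^3 * ω^2 = 1 := by rw [← pow_add]; exact ω_pow_five
  exact eq_inv_of_mul_eq_one_left h

lemma sqrt5_sq : Real.sqrt 5 ^ 2 = 5 := Real.sq_sqrt (by norm_num)

lemma μ_decomp (n : ZMod 5) :
    ((μ₅ n : ℝ) : ℂ) = ((Real.sqrt 5 / 5 : ℝ) : ℂ)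
      + ((5 - Real.sqrt 5) / 10 : ℝ) * (φ n + (φ n)^4) := by
  have h5 : n = 0 ∨ n = 1 ∨ n = 2 ∨ n = 3 ∨ n = 4 := by revert n; decide
  have hφ : ∀ m : ZMod 5, φ m = ω ^ m.val := fun _ => rfl
  rcases h5 with rfl | rfl | rfl | rfl | rfl
  · rw [hφ, show (0 : ZMod 5).val = 0 from rfl, pow_zero, one_pow]
    have key : (1 : ℝ) = Real.sqrt 5/5 + (5 - Real.sqrt 5)/10 * (1 + 1) := by
      nlinarith [sqrt5_sq]
    rw [show μ₅ 0 = 1 from rfl]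
    push_cast
    have hk := congrArg Complex.ofReal key
    push_cast at hk ⊢
    linear_combination hk
  · rw [hφ, show (1 : ZMod 5).val = 1 by decide, pow_one, ω4_eq, ω_re]
    have key : (Real.sqrt 5 - 1)/2 = Real.sqrt 5/5 + (5 - Real.sqrt 5)/10 * ((Real.sqrt 5-1)/2) := by
      nlinarith [sqrt5_sq]
    rw [show μ₅ 1 = (Real.sqrt 5 - 1)/2 from rfl]
    push_cast
    have hk := congrArg Complex.ofReal key
    push_cast at hk ⊢
    linear_combination hk
  · rw [hφ, show (2 : ZMod 5).val = 2 by decide, show ((ω^2)^4 : ℂ) = ω^3 by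
      rw [← pow_mul, ω_pow_mod]]
    rw [ω3_eq, ω2_re]
    have key : (0:ℝ) = Real.sqrt 5/5 + (5 - Real.sqrt 5)/10 * (-(1+Real.sqrt 5)/2) := by
      nlinarith [sqrt5_sq]
    rw [show μ₅ 2 = 0 from rfl]
    push_cast
    have hk := congrArg Complex.ofReal key
    push_cast at hk ⊢
    linear_combination hk
  · rw [hφ, show (3 : ZMod 5).val = 3 by decide, show ((ω^3)^4 : ℂ) = ω^2 by
      rw [← pow_mul, ω_pow_mod]]
    rw [show (ω^3 + ω^2 : ℂ) = ω^2 + (ω^2)⁻¹ by rw [ω3_eq]; ring, ω2_re]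
    have key : (0:ℝ) = Real.sqrt 5/5 + (5 - Real.sqrt 5)/10 * (-(1+Real.sqrt 5)/2) := by
      nlinarith [sqrt5_sq]
    rw [show μ₅ 3 = 0 from rfl]
    push_cast
    have hk := congrArg Complex.ofReal key
    push_cast at hk ⊢
    linear_combination hk
  · rw [hφ, show (4 : ZMod 5).val = 4 by decide, show ((ω^4)^4 : ℂ) = ω^1 by
      rw [← pow_mul, ω_pow_mod], pow_one]
    rw [show (ω^4 + ω : ℂ) = ω + ω⁻¹ by rw [ω4_eq]; ring, ω_re]
    have key : (Real.sqrt 5 - 1)/2 = Real.sqrt 5/5 + (5 - Real.sqrt 5)/10 * ((Real.sqrt 5-1)/2) := by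
      nlinarith [sqrt5_sq]
    rw [show μ₅ 4 = (Real.sqrt 5 - 1)/2 from rfl]
    push_cast
    have hk := congrArg Complex.ofReal key
    push_cast at hk ⊢
    linear_combination hk

lemma μ₅_posdef : IsPosDef μ₅ := by
  intro N x c
  set a₀ : ℝ := Real.sqrt 5 / 5 with ha₀def
  set a₁ : ℝ := (5 - Real.sqrt 5) / 10 with ha₁def
  set S₀ : ℂ := ∑ i, c i with hS₀
  set S₁ : ℂ := ∑ i, c i * φ (x i) with hS₁
  set S₄ : ℂ := ∑ i, c i * (φ (x i))^4 with hS₄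
  have key : ∑ i, ∑ j, c i * (starRingEnd ℂ) (c j) * ((μ₅ (x i - x j) : ℝ) : ℂ)
      = (a₀:ℂ) * (S₀ * (starRingEnd ℂ) S₀) + (a₁:ℂ) * (S₁ * (starRingEnd ℂ) S₁)
        + (a₁:ℂ) * (S₄ * (starRingEnd ℂ) S₄) := by
    rw [hS₀, hS₁, hS₄, map_sum, map_sum, map_sum, Finset.sum_mul_sum, Finset.sum_mul_sum,
      Finset.sum_mul_sum, Finset.mul_sum, Finset.mul_sum, Finset.mul_sum,
      ← Finset.sum_add_distrib, ← Finset.sum_add_distrib]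
    refine Finset.sum_congr rfl fun i _ => ?_
    rw [Finset.mul_sum, Finset.mul_sum, Finset.mul_sum, ← Finset.sum_add_distrib,
      ← Finset.sum_add_distrib]
    refine Finset.sum_congr rfl fun j _ => ?_
    rw [μ_decomp, φ_sub]
    simp only [map_mul, map_pow, mul_pow]
    ring
  rw [key, Complex.mul_conj, Complex.mul_conj, Complex.mul_conj]
  have ha₀ : 0 ≤ a₀ := by positivity
  have ha₁ : 0 ≤ a₁ := by nlinarith [sqrt5_sq, Real.sqrt_nonneg 5]
  have : ((a₀ * Complex.normSq S₀ + a₁ * Complex.normSq S₁ + a₁ * Complex.normSq S₄ : ℝ) : ℂ)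
      = (a₀:ℂ) * (Complex.normSq S₀ : ℂ) + (a₁:ℂ) * (Complex.normSq S₁ : ℂ)
        + (a₁:ℂ) * (Complex.normSq S₄ : ℂ) := by push_cast; ring
  rw [← this, Complex.zero_le_real]
  have h0 := Complex.normSq_nonneg S₀
  have h1 := Complex.normSq_nonneg S₁
  have h4 := Complex.normSq_nonneg S₄
  positivity

theorem μ₅_properties :
    (∀ n, 0 ≤ μ₅ n) ∧ IsPosDef μ₅ ∧
    (∑ n : ZMod 5, V₅ n * μ₅ n) = 2 - Real.sqrt 5 ∧
    (∑ n : ZMod 5, V₅ n * μ₅ n) < 0 := by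
  have hsum : (∑ n : ZMod 5, V₅ n * μ₅ n) = 2 - Real.sqrt 5 := by
    have h : (Finset.univ : Finset (ZMod 5)) = {0,1,2,3,4} := by decide
    rw [h]
    rw [show ({0,1,2,3,4} : Finset (ZMod 5)) = insert 0 (insert 1 (insert 2 (insert 3 {4}))) from rfl]
    rw [Finset.sum_insert (by decide), Finset.sum_insert (by decide), Finset.sum_insert (by decide),
      Finset.sum_insert (by decide), Finset.sum_singleton]
    simp +decide only [V₅, μ₅, if_true, if_false]
    ring
  refine ⟨fun n => ?_, μ₅_posdef, hsum, ?_⟩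
  · rw [μ₅]
    split_ifs with h1 h2
    · norm_num
    · nlinarith [sqrt5_sq, Real.sqrt_nonneg 5]
    · exact le_refl 0
  · rw [hsum]
    nlinarith [sqrt5_sq, Real.sqrt_nonneg 5]
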